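/- Under the Ewens distribution with parameter θ ≥ 0 on S_n, the expected number of cycles equals 1 + Σ_{i=2}^{n} θ/(i−1+θ), and in particular is at most 2 + θ·log(n). -/

import Mathlib

open Finset
open scoped Classical
open Equiv Equiv.Perm
set_option maxHeartbeats 1000000

/-- The number of cycles of a permutation of `Fin n`, counting fixed points as
(singleton) cycles. -/
lemma swap_mul_cycle_aux {α : Type*} [Fintype α] [DecidableEq α] {c : Perm α}
    (hc : c.IsCycle) {a b : α} (hab : a ≠ b) (ha : a ∉ c.support) (hb : b ∈ c.support) :
    (swap a b * c).IsCycle ∧ (swap a b * c).support = insert a c.support := by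
  have hca : c a = a := notMem_support.1 ha
  have hcb : c b ≠ b := mem_support.1 hb
  set d := swap a b * c with hd
  have hda : d a = b := by simp [hd, mul_apply, hca]
  have hsupp : ∀ y, d y ≠ y ↔ (y = a ∨ y ∈ c.support) := by
    intro y
    rcases eq_or_ne y a with rfl | hya
    · simp [hda, Ne.symm hab]
    · constructor
      · intro hy
        by_contra hcon
        push_neg at hcon
        obtain ⟨-, hns⟩ := hcon
        have hcy : c y = y := notMem_support.1 hns
        have hyb : y ≠ b := by rintro rfl; exact hns hb
        apply hy
        simp [hd, mul_apply, hcy, swap_apply_of_ne_of_ne hya hyb]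
      · rintro (rfl | hy)
        · exact absurd rfl hya
        · have hcy : c y ≠ y := mem_support.1 hy
          have hcy' : c y ∈ c.support := apply_mem_support.2 hy
          have hcya : c y ≠ a := by rintro h; exact ha (h ▸ hcy')
          rcases eq_or_ne (c y) b with hcyb | hcyb
          · simp [hd, mul_apply, hcyb, Ne.symm hya]
          · simp [hd, mul_apply, swap_apply_of_ne_of_ne hcya hcyb]
            exact hcy
  have hchain : ∀ i : ℕ, d.SameCycle a ((c ^ i) b) := by
    intro i
    induction i with
    | zero => exact ⟨1, by simpa using hda⟩
    | succ i ih =>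
      rcases eq_or_ne ((c ^ (i + 1)) b) b with h1 | h1
      · rw [h1]; exact ⟨1, by simpa using hda⟩
      · have h2 : (c ^ (i + 1)) b ∈ c.support := pow_apply_mem_support.2 hb
        have h3 : (c ^ (i + 1)) b ≠ a := by rintro h; exact ha (h ▸ h2)
        have h4 : d ((c ^ i) b) = (c ^ (i + 1)) b := by
          have : c ((c ^ i) b) = (c ^ (i + 1)) b := by
            rw [← mul_apply, ← pow_succ']
          simp only [hd, mul_apply, this]
          exact swap_apply_of_ne_of_ne h3 h1
        exact ih.trans ⟨1, by simpa using h4⟩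
  have hcyc : d.IsCycle := by
    refine ⟨a, by rw [hda]; exact Ne.symm hab, ?_⟩
    intro y hy
    rcases (hsupp y).1 hy with rfl | hy'
    · exact SameCycle.refl _ _
    · obtain ⟨i, hi⟩ := hc.exists_pow_eq hcb (mem_support.1 hy')
      exact hi ▸ hchain i
  refine ⟨hcyc, ?_⟩
  ext y
  rw [mem_support, mem_insert]
  exact hsupp y

noncomputable def numCycles {n : ℕ} (σ : Equiv.Perm (Fin n)) : ℕ :=
  σ.cycleType.card + (Finset.univ.filter fun x => σ x = x).card

/-- The Ewens(θ) probability of a permutation `σ ∈ S_n`: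
`θ^(#(σ)-1) / ∏_{i=1}^{n-1} (θ + i)`. -/
noncomputable def ewensWeight (n : ℕ) (θ : ℝ) (σ : Equiv.Perm (Fin n)) : ℝ :=
  θ ^ (numCycles σ - 1) / ∏ i ∈ Finset.range (n - 1), (θ + (i + 1 : ℕ))


lemma fixed_card {n : ℕ} (σ : Perm (Fin n)) :
    (Finset.univ.filter fun x => σ x = x).card = n - σ.support.card := by
  have h : (Finset.univ.filter fun x => σ x = x) = σ.supportᶜ := by
    ext x; simp [mem_support]
  rw [h, card_compl, Fintype.card_fin]

lemma numCycles_swap_mul {n : ℕ} {f : Perm (Fin n)} {a b : Fin n} (hab : a ≠ b)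
    (hfa : f a = a) : numCycles (swap a b * f) + 1 = numCycles f := by
  have hasupp : a ∉ f.support := notMem_support.2 hfa
  by_cases hfb : f b = b
  · have hdisj : (swap a b).Disjoint f := by
      rw [disjoint_iff_eq_or_eq]
      intro x
      rcases eq_or_ne x a with rfl | hxa
      · exact Or.inr hfa
      rcases eq_or_ne x b with rfl | hxb
      · exact Or.inr hfb
      · exact Or.inl (swap_apply_of_ne_of_ne hxa hxb)
    have hct : (swap a b * f).cycleType.card = f.cycleType.card + 1 := by
      rw [hdisj.cycleType_mul, (isCycle_swap hab).cycleType]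
      simp [add_comm]
    have hsup : (swap a b * f).support = {a, b} ∪ f.support := by
      rw [hdisj.support_mul, support_swap hab]
    have hdisj2 : _root_.Disjoint ({a, b} : Finset (Fin n)) f.support := by
      rw [Finset.disjoint_left]
      intro x hx hx2
      rcases Finset.mem_insert.1 hx with rfl | hx3
      · exact hasupp hx2
      · rw [Finset.mem_singleton] at hx3
        subst hx3
        exact (notMem_support.2 hfb) hx2
    have hcard : (swap a b * f).support.card = f.support.card + 2 := by
      rw [hsup, card_union_of_disjoint hdisj2, Finset.card_insert_of_notMem (by simp [hab]),
        Finset.card_singleton]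
      omega
    have hle : f.support.card + 2 ≤ n := by
      have h1 := card_le_univ ((swap a b * f).support)
      rw [hcard, Fintype.card_fin] at h1
      omega
    unfold numCycles
    rw [fixed_card, fixed_card, hct, hcard]
    omega
  · set c := f.cycleOf b with hcdef
    have hc : c.IsCycle := isCycle_cycleOf f hfb
    have hbc : b ∈ c.support := by
      rw [hcdef, mem_support_cycleOf_iff]
      exact ⟨SameCycle.refl _ _, mem_support.2 hfb⟩
    have hac : a ∉ c.support := fun h => hasupp (support_cycleOf_le f b h)
    have hkey : ∀ x ∈ c.support, c x = f x := by
      intro x hx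
      rw [hcdef, mem_support_cycleOf_iff] at hx
      rw [hcdef, cycleOf_apply, if_pos hx.1]
    set h := c⁻¹ * f with hh
    have hfeq : f = c * h := by rw [hh, mul_inv_cancel_left]
    have hdisj : c.Disjoint h := by
      rw [disjoint_iff_eq_or_eq]
      intro x
      by_cases hx : x ∈ c.support
      · right; rw [hh, mul_apply, ← hkey x hx, Perm.inv_def, Equiv.symm_apply_apply]
      · left; exact notMem_support.1 hx
    obtain ⟨hdcyc, hdsupp⟩ := swap_mul_cycle_aux hc hab hac hbc
    have hha : a ∉ h.support := by
      intro hmem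
      apply hasupp
      rw [hfeq, hdisj.support_mul]
      exact Finset.mem_union_right _ hmem
    have hdh : (swap a b * c).Disjoint h := by
      rw [disjoint_iff_disjoint_support, hdsupp, Finset.disjoint_left]
      intro x hx hx2
      rcases Finset.mem_insert.1 hx with rfl | hx3
      · exact hha hx2
      · exact (Finset.disjoint_left.1 hdisj.disjoint_support) hx3 hx2
    have heq : swap a b * f = (swap a b * c) * h := by rw [hfeq, mul_assoc]
    have hct : (swap a b * f).cycleType.card = f.cycleType.card := by
      rw [heq, hdh.cycleType_mul]
      conv_rhs => rw [hfeq, hdisj.cycleType_mul]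
      simp [hdcyc.cycleType, hc.cycleType]
    have hsc : (swap a b * f).support = insert a f.support := by
      rw [heq, hdh.support_mul, hdsupp]
      conv_rhs => rw [hfeq, hdisj.support_mul]
      rw [Finset.insert_union]
    have hcard : (swap a b * f).support.card = f.support.card + 1 := by
      rw [hsc, Finset.card_insert_of_notMem hasupp]
    have hle : f.support.card + 1 ≤ n := by
      have h1 := card_le_univ ((swap a b * f).support)
      rw [hcard, Fintype.card_fin] at h1
      omega
    unfold numCycles
    rw [fixed_card, fixed_card, hct, hcard]
    omega

def finSuccPredEquiv {n : ℕ} : Fin n ≃ {x : Fin (n + 1) // x ≠ 0} where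
  toFun x := ⟨x.succ, Fin.succ_ne_zero x⟩
  invFun x := (x : Fin (n + 1)).pred x.2
  left_inv x := by simp
  right_inv x := by simp

lemma decomp_eq {n : ℕ} (p : Fin (n + 1)) (e : Perm (Fin n)) :
    Equiv.Perm.decomposeFin.symm (p, e) = swap 0 p * Equiv.Perm.decomposeFin.symm (0, e) := by
  refine Equiv.ext fun x => ?_
  refine Fin.cases ?_ ?_ x
  · simp [mul_apply]
  · intro y
    simp [mul_apply, Equiv.Perm.decomposeFin_symm_apply_succ]

lemma decomp_zero_eq_extendDomain {n : ℕ} (e : Perm (Fin n)) :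
    Equiv.Perm.decomposeFin.symm (0, e) = e.extendDomain finSuccPredEquiv := by
  refine Equiv.ext fun x => ?_
  refine Fin.cases ?_ ?_ x
  · rw [Equiv.Perm.decomposeFin_symm_apply_zero,
      Perm.extendDomain_apply_not_subtype _ finSuccPredEquiv (b := (0 : Fin (n+1))) (by simp)]
  · intro y
    rw [Equiv.Perm.decomposeFin_symm_apply_succ,
      Perm.extendDomain_apply_subtype _ finSuccPredEquiv (b := y.succ) (Fin.succ_ne_zero y)]
    have : finSuccPredEquiv.symm ⟨y.succ, Fin.succ_ne_zero y⟩ = y := by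
      simp [finSuccPredEquiv]
    rw [this]
    simp [finSuccPredEquiv]

lemma numCycles_decomp_zero {n : ℕ} (e : Perm (Fin n)) :
    numCycles (Equiv.Perm.decomposeFin.symm (0, e)) = numCycles e + 1 := by
  rw [decomp_zero_eq_extendDomain]
  have hct := Equiv.Perm.cycleType_extendDomain finSuccPredEquiv (g := e)
  have hsc := Equiv.Perm.card_support_extend_domain finSuccPredEquiv (g := e)
  have hle : e.support.card ≤ n := by
    have := card_le_univ e.support
    rwa [Fintype.card_fin] at this
  unfold numCycles
  rw [fixed_card, fixed_card, hct, hsc]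
  omega

lemma numCycles_decomp {n : ℕ} (p : Fin (n + 1)) (e : Perm (Fin n)) :
    numCycles (Equiv.Perm.decomposeFin.symm (p, e))
      = numCycles e + (if p = 0 then 1 else 0) := by
  rcases eq_or_ne p 0 with rfl | hp
  · rw [numCycles_decomp_zero]; simp
  · rw [if_neg hp, decomp_eq]
    have h0 : Equiv.Perm.decomposeFin.symm (0, e) 0 = 0 :=
      Equiv.Perm.decomposeFin_symm_apply_zero 0 e
    have := numCycles_swap_mul (Ne.symm hp) h0
    rw [numCycles_decomp_zero] at this
    omega

lemma numCycles_pos {n : ℕ} (hn : 1 ≤ n) (σ : Perm (Fin n)) : 1 ≤ numCycles σ := by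
  by_cases h : σ = 1
  · subst h
    unfold numCycles
    have : (Finset.univ.filter fun x => (1 : Perm (Fin n)) x = x) = univ := by
      ext x; simp
    rw [this, card_univ, Fintype.card_fin]
    omega
  · have h1 : σ.cycleType ≠ 0 := by simpa [Equiv.Perm.cycleType_eq_zero] using h
    have h2 := Multiset.card_pos.2 h1
    unfold numCycles
    omega

lemma numCycles_one_dim (σ : Perm (Fin 1)) : numCycles σ = 1 := by
  have h : σ = 1 := Subsingleton.elim σ 1
  subst h
  unfold numCycles
  have : (Finset.univ.filter fun x => (1 : Perm (Fin 1)) x = x) = univ := by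
    ext x; simp
  rw [this, card_univ, Fintype.card_fin]
  simp

lemma ewens_sums (θ : ℝ) (hθ : 0 ≤ θ) : ∀ n : ℕ, 1 ≤ n →
    (∑ σ : Perm (Fin n), θ ^ (numCycles σ - 1)) = (∏ i ∈ range (n - 1), (θ + (i + 1 : ℕ))) ∧
    (∑ σ : Perm (Fin n), (numCycles σ : ℝ) * θ ^ (numCycles σ - 1))
      = (∏ i ∈ range (n - 1), (θ + (i + 1 : ℕ)))
          * (1 + ∑ i ∈ Icc 2 n, θ / ((i : ℝ) - 1 + θ)) := by
  refine Nat.le_induction ?_ ?_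
  · have hcard : Fintype.card (Perm (Fin 1)) = 1 := by
      rw [Fintype.card_perm, Fintype.card_fin]
      rfl
    constructor
    · simp [numCycles_one_dim, hcard]
    · rw [Finset.Icc_eq_empty (by omega)]
      simp [numCycles_one_dim, hcard]
  · intro n hn IH
    obtain ⟨Q, N⟩ := IH
    set D : ℝ := ∏ i ∈ range (n - 1), (θ + (i + 1 : ℕ)) with hDdef
    have hD1 : (∏ i ∈ range (n + 1 - 1), (θ + (i + 1 : ℕ))) = D * (θ + n) := by
      have h2 : n + 1 - 1 = (n - 1) + 1 := by omega
      rw [h2, prod_range_succ]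
      have h3 : ((n - 1 : ℕ) + 1 : ℕ) = n := by omega
      rw [h3]
    have hpow : ∀ e : Perm (Fin n), θ ^ (numCycles e) = θ ^ (numCycles e - 1) * θ := by
      intro e
      have h1 := numCycles_pos hn e
      rw [← pow_succ]
      congr 1
      omega
    have hsum1 : ∑ e : Perm (Fin n), θ ^ (numCycles e) = D * θ := by
      rw [Finset.sum_congr rfl fun e _ => hpow e, ← Finset.sum_mul, Q]
    -- first component
    have hQ : (∑ σ : Perm (Fin (n + 1)), θ ^ (numCycles σ - 1)) = D * (θ + n) := by
      calc ∑ σ : Perm (Fin (n + 1)), θ ^ (numCycles σ - 1)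
          = ∑ x : Fin (n + 1) × Perm (Fin n),
              θ ^ (numCycles (Equiv.Perm.decomposeFin.symm x) - 1) :=
            (Equiv.sum_comp Equiv.Perm.decomposeFin.symm _).symm
        _ = ∑ p : Fin (n + 1), ∑ e : Perm (Fin n),
              θ ^ (numCycles (Equiv.Perm.decomposeFin.symm (p, e)) - 1) :=
            Fintype.sum_prod_type _
        _ = (∑ e : Perm (Fin n),
              θ ^ (numCycles (Equiv.Perm.decomposeFin.symm ((0 : Fin (n + 1)), e)) - 1))
            + ∑ i : Fin n, ∑ e : Perm (Fin n),
              θ ^ (numCycles (Equiv.Perm.decomposeFin.symm (i.succ, e)) - 1) :=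
            Fin.sum_univ_succ _
        _ = (∑ e : Perm (Fin n), θ ^ (numCycles e))
            + ∑ i : Fin n, ∑ e : Perm (Fin n), θ ^ (numCycles e - 1) := by
            congr 1
            · refine Finset.sum_congr rfl fun e _ => ?_
              congr 1
              rw [numCycles_decomp]
              simp
            · refine Finset.sum_congr rfl fun i _ => ?_
              refine Finset.sum_congr rfl fun e _ => ?_
              congr 1
              rw [numCycles_decomp]
              simp [Fin.succ_ne_zero]
        _ = D * θ + (n : ℝ) * D := by
            rw [hsum1, Q]
            simp [Finset.card_univ, mul_comm]
        _ = D * (θ + n) := by ring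
    constructor
    · rw [hD1]; exact hQ
    · have hsum2 : ∑ e : Perm (Fin n), (numCycles e : ℝ) * θ ^ (numCycles e)
          = (D * (1 + ∑ i ∈ Icc 2 n, θ / ((i : ℝ) - 1 + θ))) * θ := by
        calc ∑ e : Perm (Fin n), (numCycles e : ℝ) * θ ^ (numCycles e)
            = ∑ e : Perm (Fin n), ((numCycles e : ℝ) * θ ^ (numCycles e - 1)) * θ :=
              Finset.sum_congr rfl fun e _ => by rw [hpow e]; ring
          _ = (∑ e : Perm (Fin n), (numCycles e : ℝ) * θ ^ (numCycles e - 1)) * θ := by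
              rw [Finset.sum_mul]
          _ = (D * (1 + ∑ i ∈ Icc 2 n, θ / ((i : ℝ) - 1 + θ))) * θ := by rw [N]
      have hN : (∑ σ : Perm (Fin (n + 1)), (numCycles σ : ℝ) * θ ^ (numCycles σ - 1))
          = (θ + n) * (D * (1 + ∑ i ∈ Icc 2 n, θ / ((i : ℝ) - 1 + θ))) + θ * D := by
        calc ∑ σ : Perm (Fin (n + 1)), (numCycles σ : ℝ) * θ ^ (numCycles σ - 1)
            = ∑ x : Fin (n + 1) × Perm (Fin n),
                (numCycles (Equiv.Perm.decomposeFin.symm x) : ℝ)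
                  * θ ^ (numCycles (Equiv.Perm.decomposeFin.symm x) - 1) :=
              (Equiv.sum_comp Equiv.Perm.decomposeFin.symm _).symm
          _ = ∑ p : Fin (n + 1), ∑ e : Perm (Fin n),
                (numCycles (Equiv.Perm.decomposeFin.symm (p, e)) : ℝ)
                  * θ ^ (numCycles (Equiv.Perm.decomposeFin.symm (p, e)) - 1) :=
              Fintype.sum_prod_type _
          _ = (∑ e : Perm (Fin n),
                (numCycles (Equiv.Perm.decomposeFin.symm ((0 : Fin (n + 1)), e)) : ℝ)
                  * θ ^ (numCycles (Equiv.Perm.decomposeFin.symm ((0 : Fin (n + 1)), e)) - 1))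
              + ∑ i : Fin n, ∑ e : Perm (Fin n),
                (numCycles (Equiv.Perm.decomposeFin.symm (i.succ, e)) : ℝ)
                  * θ ^ (numCycles (Equiv.Perm.decomposeFin.symm (i.succ, e)) - 1) :=
              Fin.sum_univ_succ _
          _ = (∑ e : Perm (Fin n), ((numCycles e : ℝ) + 1) * θ ^ (numCycles e))
              + ∑ i : Fin n, ∑ e : Perm (Fin n),
                  (numCycles e : ℝ) * θ ^ (numCycles e - 1) := by
              congr 1
              · refine Finset.sum_congr rfl fun e _ => ?_
                rw [numCycles_decomp, if_pos rfl, Nat.add_sub_cancel]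
                push_cast
                ring
              · refine Finset.sum_congr rfl fun i _ => ?_
                refine Finset.sum_congr rfl fun e _ => ?_
                rw [numCycles_decomp]
                simp [Fin.succ_ne_zero]
          _ = (∑ e : Perm (Fin n), (numCycles e : ℝ) * θ ^ (numCycles e))
              + (∑ e : Perm (Fin n), θ ^ (numCycles e))
              + (n : ℝ) * ∑ e : Perm (Fin n), (numCycles e : ℝ) * θ ^ (numCycles e - 1) := by
              have hA : ∑ e : Perm (Fin n), ((numCycles e : ℝ) + 1) * θ ^ (numCycles e)
                  = (∑ e : Perm (Fin n), (numCycles e : ℝ) * θ ^ (numCycles e))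
                    + ∑ e : Perm (Fin n), θ ^ (numCycles e) := by
                rw [← Finset.sum_add_distrib]
                exact Finset.sum_congr rfl fun e _ => by ring
              have hB : ∑ i : Fin n, ∑ e : Perm (Fin n),
                    (numCycles e : ℝ) * θ ^ (numCycles e - 1)
                  = (n : ℝ) * ∑ e : Perm (Fin n), (numCycles e : ℝ) * θ ^ (numCycles e - 1) := by
                rw [Finset.sum_const, Finset.card_univ, Fintype.card_fin, nsmul_eq_mul]
              rw [hA, hB]
          _ = (θ + n) * (D * (1 + ∑ i ∈ Icc 2 n, θ / ((i : ℝ) - 1 + θ))) + θ * D := by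
              rw [hsum2, hsum1, N]
              ring
      rw [hD1, hN]
      rw [Finset.sum_Icc_succ_top (by omega : 2 ≤ n + 1)]
      have hne : ((n + 1 : ℕ) : ℝ) - 1 + θ ≠ 0 := by
        push_cast
        have : (1 : ℝ) ≤ (n : ℝ) := by exact_mod_cast hn
        nlinarith
      have hsplit : ((n + 1 : ℕ) : ℝ) - 1 + θ = (n : ℝ) + θ := by push_cast; ring
      rw [hsplit] at hne ⊢
      field_simp
      ring

lemma harmonic_log (θ : ℝ) (hθ : 0 ≤ θ) : ∀ n : ℕ, 2 ≤ n →
    ∑ i ∈ Icc 3 n, θ / ((i : ℝ) - 1 + θ) ≤ θ * Real.log ((n : ℝ) - 1) := by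
  refine Nat.le_induction ?_ ?_
  · rw [Finset.Icc_eq_empty (by omega)]
    norm_num
  · intro n hn IH
    rw [Finset.sum_Icc_succ_top (by omega : 3 ≤ n + 1),
      show (((n + 1 : ℕ) : ℝ) - 1 + θ) = (n : ℝ) + θ by push_cast; ring]
    have h2 : (2 : ℝ) ≤ (n : ℝ) := by exact_mod_cast hn
    have hpos : (0 : ℝ) < (n : ℝ) - 1 := by linarith
    have hpos2 : (0 : ℝ) < (n : ℝ) := by linarith
    have hlog : Real.log ((n : ℝ) - 1) - Real.log n ≤ -(1 / (n : ℝ)) := by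
      rw [← Real.log_div (ne_of_gt hpos) (ne_of_gt hpos2)]
      have h3 := Real.log_le_sub_one_of_pos (div_pos hpos hpos2)
      have heq : ((n : ℝ) - 1) / n - 1 = -(1 / n) := by field_simp; ring
      linarith
    have hfrac : θ / ((n : ℝ) + θ) ≤ θ * (1 / (n : ℝ)) := by
      have h4 : (1 : ℝ) / ((n : ℝ) + θ) ≤ 1 / (n : ℝ) :=
        one_div_le_one_div_of_le hpos2 (by linarith)
      calc θ / ((n : ℝ) + θ) = θ * (1 / ((n : ℝ) + θ)) := by ring
        _ ≤ θ * (1 / n) := mul_le_mul_of_nonneg_left h4 hθ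
    have h5 : θ * (1 / (n : ℝ)) ≤ θ * (Real.log n - Real.log ((n : ℝ) - 1)) :=
      mul_le_mul_of_nonneg_left (by linarith) hθ
    have h6 : (((n + 1 : ℕ) : ℝ) - 1) = (n : ℝ) := by push_cast; ring
    rw [h6]
    linarith

lemma S_bound (θ : ℝ) (hθ : 0 ≤ θ) (n : ℕ) (hn : 1 ≤ n) :
    1 + ∑ i ∈ Icc 2 n, θ / ((i : ℝ) - 1 + θ) ≤ 2 + θ * Real.log n := by
  rcases lt_or_ge n 2 with h | h
  · have hn1 : n = 1 := by omega
    subst hn1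
    rw [Finset.Icc_eq_empty (by omega)]
    simp [Real.log_one]
  · have hsplit : Icc 2 n = insert 2 (Icc 3 n) := by
      ext x
      simp only [Finset.mem_Icc, Finset.mem_insert]
      omega
    rw [hsplit, Finset.sum_insert (by simp [Finset.mem_Icc])]
    have h0 : ((2 : ℕ) : ℝ) - 1 + θ = 1 + θ := by norm_num
    rw [h0]
    have h1 : θ / (1 + θ) ≤ 1 := div_le_one_of_le₀ (by linarith) (by linarith)
    have h2 := harmonic_log θ hθ n h
    have hpos : (0 : ℝ) < (n : ℝ) - 1 := by
      have : (2 : ℝ) ≤ (n : ℝ) := by exact_mod_cast h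
      linarith
    have h3 : θ * Real.log ((n : ℝ) - 1) ≤ θ * Real.log n := by
      apply mul_le_mul_of_nonneg_left _ hθ
      apply Real.log_le_log hpos
      linarith
    linarith

/-- Under the Ewens(θ) distribution on `S_n`, the expected number of cycles equals
`1 + ∑_{i=2}^n θ/(i-1+θ)`, and in particular is at most `2 + θ·log n`. -/
theorem ewens_expected_numCycles (n : ℕ) (hn : 1 ≤ n) (θ : ℝ) (hθ : 0 ≤ θ) :
    (∑ σ : Equiv.Perm (Fin n), ewensWeight n θ σ * (numCycles σ : ℝ))
        = 1 + ∑ i ∈ Finset.Icc 2 n, θ / ((i : ℝ) - 1 + θ) ∧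
      (∑ σ : Equiv.Perm (Fin n), ewensWeight n θ σ * (numCycles σ : ℝ))
        ≤ 2 + θ * Real.log n := by
  obtain ⟨Q, N⟩ := ewens_sums θ hθ n hn
  set D : ℝ := ∏ i ∈ range (n - 1), (θ + (i + 1 : ℕ)) with hDdef
  have hDpos : 0 < D := by
    apply Finset.prod_pos
    intro i _
    have h1 : (0 : ℝ) < ((i + 1 : ℕ) : ℝ) := by exact_mod_cast Nat.succ_pos i
    linarith
  have hL : (∑ σ : Equiv.Perm (Fin n), ewensWeight n θ σ * (numCycles σ : ℝ))
      = (∑ σ : Equiv.Perm (Fin n), (numCycles σ : ℝ) * θ ^ (numCycles σ - 1)) / D := by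
    rw [Finset.sum_div]
    refine Finset.sum_congr rfl fun σ _ => ?_
    unfold ewensWeight
    rw [← hDdef]
    ring
  have heq : (∑ σ : Equiv.Perm (Fin n), ewensWeight n θ σ * (numCycles σ : ℝ))
      = 1 + ∑ i ∈ Finset.Icc 2 n, θ / ((i : ℝ) - 1 + θ) := by
    rw [hL, N, mul_div_cancel_left₀ _ (ne_of_gt hDpos)]
  exact ⟨heq, heq ▸ S_bound θ hθ n hn⟩
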